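/- Let 0 < k < ω and let X be a real Banach space satisfying condition (B) that admits a generating strongly dispersed sequence {x_α}_{α<ℵ_k} (i.e. [x_α : α<ℵ_k] = X). Then for every separable subspace Y ⊆ X there exist a closed subspace Z ⊆ X with dens(X/Z) ≤ ℵ_{k−1} and a separable subspace W with Y ⊆ W ⊆ Z such that W is the range of a bounded linear projection on Z. -/

import Mathlib

open Cardinal Ordinal Set Pointwise

universe u

noncomputable def closedSpan {X : Type u} [SeminormedAddCommGroup X] [NormedSpace ℝ X]
    (s : Set X) : Submodule ℝ X :=
  (Submodule.span ℝ s).topologicalClosure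

def IsDispersed {X : Type u} [SeminormedAddCommGroup X] [NormedSpace ℝ X]
    (x : Ordinal.{u} → X) (lam : Ordinal.{u}) : Prop :=
  ∀ β < lam,
    (⋂ γ ∈ Set.Iio lam, (closedSpan (x '' {α | γ < α ∧ α < lam}) : Set X)) ⊂
      (closedSpan (x '' {α | β < α ∧ α < lam}) : Set X)

def IsStronglyDispersed {X : Type u} [SeminormedAddCommGroup X] [NormedSpace ℝ X]
    (x : Ordinal.{u} → X) (lam : Ordinal.{u}) : Prop :=
  IsDispersed x lam ∧
    (⋂ β ∈ Set.Iio lam, (closedSpan (x '' {α | β < α ∧ α < lam}) : Set X)) = {0}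

/-- condition (B) -/
def CondB (X : Type u) [SeminormedAddCommGroup X] [NormedSpace ℝ X] : Prop :=
  ∀ κ : Cardinal.{u}, κ.IsRegular → ℵ₀ < κ →
    ∀ Z : Ordinal.{u} → Submodule ℝ X,
      (∀ α < κ.ord, IsClosed ((Z α : Set X))) →
      (∀ α β, α ≤ β → β < κ.ord → Z β ≤ Z α) →
      (⋂ α ∈ Set.Iio κ.ord, (Z α : Set X)) = {0} →
      Bornology.IsBounded
        (⋂ α ∈ Set.Iio κ.ord, closure (Metric.closedBall (0:X) 1 + (Z α : Set X)))

/-- density character: least cardinality of a dense subset (at least `ℵ₀`). -/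
noncomputable def densChar (Y : Type u) [TopologicalSpace Y] : Cardinal.{u} :=
  max ℵ₀ (sInf {c : Cardinal.{u} | ∃ s : Set Y, Dense s ∧ #s = c})

lemma exists_ratCombo {E : Type u} [SeminormedAddCommGroup E] [NormedSpace ℝ E] (s : Set E) :
    ∃ t : Set E, (Submodule.span ℝ s : Set E) ⊆ closure t ∧ #t ≤ max ℵ₀ #s := by
  classical
  let L : (↥s →₀ ℝ) →ₗ[ℝ] E := Finsupp.linearCombination ℝ (fun g : s => (g : E))
  let ψ : (↥s →₀ ℚ) → (↥s →₀ ℝ) := Finsupp.mapRange Rat.cast Rat.cast_zero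
  let φ : (↥s →₀ ℚ) → E := fun c => L (ψ c)
  have hψadd : ∀ c c', ψ (c + c') = ψ c + ψ c' := fun c c' =>
    Finsupp.mapRange_add (by push_cast; simp) c c'
  have hψsmul : ∀ (q : ℚ) c, ψ (q • c) = (q : ℝ) • ψ c := by
    intro q c
    ext a
    simp [ψ, Finsupp.mapRange_apply, _root_.smul_eq_mul, Rat.cast_mul]
  have hφadd : ∀ c c', φ (c + c') = φ c + φ c' := fun c c' => by
    rw [show φ (c + c') = L (ψ (c + c')) from rfl, hψadd, map_add]
  have hφsmul : ∀ (q : ℚ) c, φ (q • c) = (q : ℝ) • φ c := fun q c => by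
    rw [show φ (q • c) = L (ψ (q • c)) from rfl, hψsmul, map_smul]
  have hφzero : φ 0 = 0 := by
    rw [show φ 0 = L (ψ 0) from rfl, show ψ 0 = 0 from Finsupp.mapRange_zero, map_zero]
  refine ⟨Set.range φ, ?_, ?_⟩
  · -- density of span inside closure of range
    have htadd : ∀ a ∈ Set.range φ, ∀ b ∈ Set.range φ, a + b ∈ Set.range φ := by
      rintro a ⟨c, rfl⟩ b ⟨c', rfl⟩; exact ⟨c + c', hφadd c c'⟩
    have htr : ∀ (r : ℝ), ∀ a ∈ Set.range φ, r • a ∈ closure (Set.range φ) := by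
      rintro r a ⟨c, rfl⟩
      have hr : r ∈ closure (Set.range ((↑) : ℚ → ℝ)) := Rat.denseRange_cast r
      have hcont : Continuous fun y : ℝ => y • φ c := continuous_id.smul continuous_const
      refine map_mem_closure (f := fun y : ℝ => y • φ c) hcont hr ?_
      rintro y ⟨q, rfl⟩
      exact ⟨q • c, hφsmul q c⟩
    have hadd1 : ∀ a ∈ Set.range φ, ∀ b ∈ closure (Set.range φ),
        a + b ∈ closure (Set.range φ) := by
      intro a ha b hb
      exact map_mem_closure (continuous_add_left a) hb (htadd a ha)
    let S : Submodule ℝ E :=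
      { carrier := closure (Set.range φ)
        zero_mem' := subset_closure ⟨0, hφzero⟩
        add_mem' := by
          intro a b ha hb
          have := map_mem_closure (continuous_add_right b) ha
            (fun y hy => hadd1 y hy b hb)
          rwa [closure_closure] at this
        smul_mem' := by
          intro r a ha
          have := map_mem_closure (continuous_const_smul r) ha (fun y hy => htr r y hy)
          rwa [closure_closure] at this }
    have hs : s ⊆ S := by
      intro g hg
      refine subset_closure ⟨Finsupp.single ⟨g, hg⟩ 1, ?_⟩
      have h1 : ψ (Finsupp.single ⟨g, hg⟩ 1) = Finsupp.single ⟨g, hg⟩ (1 : ℝ) := by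
        simp [ψ]
      rw [show φ (Finsupp.single ⟨g, hg⟩ 1) = L (ψ (Finsupp.single ⟨g, hg⟩ 1)) from rfl, h1]
      simp [L, Finsupp.linearCombination_single]
    exact fun a ha => (Submodule.span_le.2 hs) ha
  · refine (mk_range_le).trans ?_
    rcases fintypeOrInfinite ↥s with hfin | hinf
    · exact le_max_of_le_left (Cardinal.mk_le_aleph0)
    · rw [mk_finsupp_lift_of_infinite]
      simp [max_comm]

theorem stmt12 {X : Type u} [NormedAddCommGroup X] [NormedSpace ℝ X] [CompleteSpace X]
    (k : ℕ) (hk : 0 < k) (hB : CondB X)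
    (x : Ordinal.{u} → X)
    (hsd : IsStronglyDispersed x (Cardinal.aleph k).ord)
    (hgen : closedSpan (x '' Set.Iio (Cardinal.aleph k).ord) = ⊤) :
    ∀ Y : Submodule ℝ X, TopologicalSpace.IsSeparable (Y : Set X) →
      ∃ Z : Submodule ℝ X, IsClosed (Z : Set X) ∧
        densChar (X ⧸ Z) ≤ Cardinal.aleph (k - 1 : ℕ) ∧
        ∃ W : Submodule ℝ X, TopologicalSpace.IsSeparable (W : Set X) ∧
          Y ≤ W ∧ W ≤ Z ∧
          ∃ P : ↥Z →L[ℝ] ↥Z,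
            (∀ v, P (P v) = P v) ∧
            (∀ v : ↥Z, (P v : X) ∈ W) ∧
            (∀ v : ↥Z, (v : X) ∈ W → P v = v) := by
  classical
  intro Y hY
  obtain ⟨m, rfl⟩ : ∃ m, k = m + 1 := ⟨k - 1, (Nat.succ_pred_eq_of_pos hk).symm⟩
  set lam : Ordinal.{u} := (Cardinal.aleph ((m + 1 : ℕ) : Ordinal)).ord with hlamdef
  set T : Ordinal.{u} → Submodule ℝ X :=
    fun β => closedSpan (x '' {α | β < α ∧ α < lam}) with hTdef
  have hcast : ((m + 1 : ℕ) : Ordinal) = Order.succ ((m : ℕ) : Ordinal) := by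
    push_cast
    exact Ordinal.add_one_eq_succ _
  have hreg : (Cardinal.aleph ((m + 1 : ℕ) : Ordinal)).IsRegular := by
    rw [hcast, Cardinal.aleph_succ]
    exact Cardinal.isRegular_succ (Cardinal.aleph0_le_aleph _)
  have halephlt : ℵ₀ < Cardinal.aleph ((m + 1 : ℕ) : Ordinal) := by
    rw [← Cardinal.aleph_zero, Cardinal.aleph_lt_aleph]
    exact_mod_cast Nat.succ_pos m
  have hTclosed : ∀ α, IsClosed ((T α : Set X)) := fun α =>
    Submodule.isClosed_topologicalClosure _
  have hTmono : ∀ α β, α ≤ β → T β ≤ T α := fun α β h =>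
    Submodule.topologicalClosure_mono (Submodule.span_mono
      (Set.image_mono (fun a ha => ⟨lt_of_le_of_lt h ha.1, ha.2⟩)))
  have hbd := hB _ hreg halephlt T (fun α _ => hTclosed α) (fun α β h _ => hTmono α β h) hsd.2
  obtain ⟨R0, hR0⟩ := isBounded_iff_forall_norm_le.mp hbd
  set R : ℝ := max R0 1 with hRdef
  have hR1 : (1:ℝ) ≤ R := le_max_right _ _
  have hRpos : (0:ℝ) < R := lt_of_lt_of_le one_pos hR1
  have hR : ∀ y ∈ ⋂ α ∈ Set.Iio lam, closure (Metric.closedBall (0:X) 1 + (T α : Set X)),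
      ‖y‖ ≤ R := fun y hy => (hR0 y hy).trans (le_max_left _ _)
  -- Claim A
  have claimA : ∀ (y : X) (r : ℝ), 0 < r →
      (∀ β < lam, ∃ t ∈ T β, ‖y - t‖ ≤ r) → ‖y‖ ≤ R * r := by
    intro y r hr h
    have hmem : r⁻¹ • y ∈ ⋂ α ∈ Set.Iio lam,
        closure (Metric.closedBall (0:X) 1 + (T α : Set X)) := by
      rw [Set.mem_iInter₂]
      intro β hβ
      obtain ⟨t, ht, hnt⟩ := h β hβ
      apply subset_closure
      refine Set.mem_add.2 ⟨r⁻¹ • y - r⁻¹ • t, ?_, r⁻¹ • t, (T β).smul_mem _ ht, by abel⟩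
      rw [Metric.mem_closedBall, dist_zero_right, ← smul_sub, norm_smul,
        Real.norm_eq_abs, abs_of_pos (inv_pos.2 hr)]
      have h2 := mul_le_mul_of_nonneg_left hnt (le_of_lt (inv_pos.2 hr))
      rw [inv_mul_cancel₀ (ne_of_gt hr)] at h2
      exact h2
    have h2 := hR _ hmem
    rw [norm_smul, Real.norm_eq_abs, abs_of_pos (inv_pos.2 hr)] at h2
    calc ‖y‖ = r * (r⁻¹ * ‖y‖) := by field_simp
    _ ≤ r * R := mul_le_mul_of_nonneg_left h2 hr.le
    _ = R * r := mul_comm _ _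
  -- Claim B
  have claimB : ∀ d : X, ∃ β, β < lam ∧ ∀ t ∈ T β, ‖d‖ ≤ 2 * R * ‖d - t‖ := by
    intro d
    rcases eq_or_ne d 0 with rfl | hd
    · exact ⟨0, hreg.ord_pos, fun t _ => by simp; positivity⟩
    · by_contra hcon
      push_neg at hcon
      have hnorm : (0:ℝ) < ‖d‖ := norm_pos_iff.2 hd
      have hr : (0:ℝ) < ‖d‖ / (2 * R) := by positivity
      have hA := claimA d (‖d‖ / (2 * R)) hr ?_
      · have hval : R * (‖d‖ / (2 * R)) = ‖d‖ / 2 := by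
          field_simp
        rw [hval] at hA
        linarith
      · intro β hβ
        obtain ⟨t, ht, hlt⟩ := hcon β hβ
        refine ⟨t, ht, ?_⟩
        rw [le_div_iff₀ (by positivity)]
        nlinarith
  -- separable Y and countable generation
  obtain ⟨D0, hD0c, hYD0⟩ := hY
  set W : Submodule ℝ X := closedSpan D0 with hWdef
  have hWcoe : (W : Set X) = closure ((Submodule.span ℝ D0 : Submodule ℝ X) : Set X) :=
    Submodule.topologicalClosure_coe _
  have hWclosed : IsClosed (W : Set X) := Submodule.isClosed_topologicalClosure _
  have hYW : Y ≤ W := by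
    intro y hy
    have h1 : closure D0 ⊆ (W : Set X) := by
      rw [hWcoe]; exact closure_mono Submodule.subset_span
    exact h1 (hYD0 hy)
  obtain ⟨D1, hD1span, hD1card⟩ := exists_ratCombo (E := X) D0
  have hWD1 : (W : Set X) ⊆ closure D1 := by
    rw [hWcoe]; exact closure_minimal hD1span isClosed_closure
  have hD1c : D1.Countable := by
    rw [← Set.countable_coe_iff, ← Cardinal.mk_le_aleph0_iff]
    exact hD1card.trans (max_le le_rfl
      (by rw [Cardinal.mk_le_aleph0_iff, Set.countable_coe_iff]; exact hD0c))
  have hWsep : TopologicalSpace.IsSeparable (W : Set X) := ⟨D1, hD1c, hWD1⟩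
  -- enumerate and pick γ
  obtain ⟨f, hf⟩ := (hD1c.insert 0).exists_eq_range (Set.insert_nonempty 0 D1)
  choose b hbl hbP using fun n => claimB (f n)
  set γ : Ordinal.{u} := ⨆ n, b n with hγdef
  have hγ : γ < lam := by
    apply iSup_lt_ord_lift _ hbl
    rw [hreg.cof_eq]
    simpa using halephlt
  have hbγ : ∀ n, b n ≤ γ := fun n => by rw [hγdef]; exact Ordinal.le_iSup b n
  -- key inequality on W vs tail
  have hC : ∀ w ∈ W, ∀ t ∈ T γ, ‖w‖ ≤ 2 * R * ‖w - t‖ := by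
    intro w hw t ht
    have hkey : ∀ d ∈ insert (0:X) D1, ‖d‖ ≤ 2 * R * ‖d - t‖ := by
      intro d hd
      rw [hf] at hd
      obtain ⟨n, rfl⟩ := hd
      exact hbP n t (hTmono _ _ (hbγ n) ht)
    refine le_of_forall_pos_le_add ?_
    intro ε hε
    have hδ : (0:ℝ) < ε / (2 * R + 1) := by positivity
    obtain ⟨d, hd, hdist⟩ := Metric.mem_closure_iff.1 (hWD1 hw) _ hδ
    have h1 : ‖d‖ ≤ 2 * R * ‖d - t‖ := hkey d (Set.mem_insert_of_mem _ hd)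
    have h2 : ‖w - d‖ < ε / (2 * R + 1) := by rwa [dist_eq_norm] at hdist
    have h3 : ‖w‖ ≤ ‖w - d‖ + ‖d‖ := by
      have := norm_add_le (w - d) d
      simpa using this
    have h4 : ‖d - t‖ ≤ ‖w - d‖ + ‖w - t‖ := by
      have := norm_add_le (d - w) (w - t)
      rw [norm_sub_rev d w] at this
      simpa using this
    have h6 : 2 * R * ‖d - t‖ ≤ 2 * R * (‖w - d‖ + ‖w - t‖) :=
      mul_le_mul_of_nonneg_left h4 (by positivity)
    have h7 : 2 * R * ‖w - d‖ ≤ 2 * R * (ε / (2 * R + 1)) :=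
      mul_le_mul_of_nonneg_left h2.le (by positivity)
    have h8 : (2 * R + 1) * (ε / (2 * R + 1)) = ε := by
      field_simp
    nlinarith
  -- the space Z := W ⊔ T γ is closed
  have hZclosed : IsClosed ((W ⊔ T γ : Submodule ℝ X) : Set X) := by
    refine IsSeqClosed.isClosed ?_
    intro u p hu hup
    have hdec : ∀ n, ∃ a ∈ W, ∃ c ∈ T γ, a + c = u n := fun n => Submodule.mem_sup.1 (hu n)
    choose a ha c hc heq using hdec
    have hkey : ∀ n n', ‖a n - a n'‖ ≤ 2 * R * ‖u n - u n'‖ := by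
      intro n n'
      have h1 := hC (a n - a n') (sub_mem (ha n) (ha n')) (c n' - c n)
        (sub_mem (hc n') (hc n))
      have h2 : (a n - a n') - (c n' - c n) = u n - u n' := by
        rw [← heq n, ← heq n']; abel
      rwa [h2] at h1
    have hcauchy : CauchySeq a := by
      rw [Metric.cauchySeq_iff]
      intro ε hε
      have hu' := hup.cauchySeq
      rw [Metric.cauchySeq_iff] at hu'
      obtain ⟨N, hN⟩ := hu' (ε / (2 * R + 1)) (by positivity)
      refine ⟨N, fun n hn n' hn' => ?_⟩
      have h1 := hkey n n'
      have h2 := hN n hn n' hn'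
      rw [dist_eq_norm] at h2 ⊢
      have h3 : 2 * R * ‖u n - u n'‖ ≤ 2 * R * (ε / (2 * R + 1)) :=
        mul_le_mul_of_nonneg_left h2.le (by positivity)
      have h8 : (2 * R + 1) * (ε / (2 * R + 1)) = ε := by field_simp
      nlinarith
    obtain ⟨al, hal⟩ := cauchySeq_tendsto_of_complete hcauchy
    have halW : al ∈ W := hWclosed.mem_of_tendsto hal (Filter.Eventually.of_forall ha)
    have htl : Filter.Tendsto (fun n => u n - a n) Filter.atTop (nhds (p - al)) := hup.sub hal
    have hclT : p - al ∈ T γ := by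
      refine (hTclosed γ).mem_of_tendsto htl (Filter.Eventually.of_forall (fun n => ?_))
      have : u n - a n = c n := by rw [← heq n]; abel
      rw [this]; exact hc n
    exact Submodule.mem_sup.2 ⟨al, halW, p - al, hclT, by abel⟩
  -- projection
  have hdecz : ∀ z : ↥(W ⊔ T γ), ∃ aa, aa ∈ W ∧ (z : X) - aa ∈ T γ := by
    intro z
    obtain ⟨aa, haa, cc, hcc, hsum⟩ := Submodule.mem_sup.1 z.2
    refine ⟨aa, haa, ?_⟩
    rw [← hsum]
    simpa using hcc
  choose wf hwfW hwfT using hdecz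
  have huniq : ∀ (z : ↥(W ⊔ T γ)) (aa : X), aa ∈ W → (z : X) - aa ∈ T γ → wf z = aa := by
    intro z aa haa hta
    have h1 : wf z - aa ∈ W := sub_mem (hwfW z) haa
    have h2 : (((z : X) - aa) - ((z : X) - wf z)) = wf z - aa := by abel
    have h3 : wf z - aa ∈ T γ := by rw [← h2]; exact sub_mem hta (hwfT z)
    have h4 := hC _ h1 _ h3
    rw [_root_.sub_self, norm_zero, mul_zero] at h4
    have h5 : ‖wf z - aa‖ = 0 := le_antisymm h4 (norm_nonneg _)
    rw [norm_eq_zero, sub_eq_zero] at h5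
    exact h5
  have hwbound : ∀ z : ↥(W ⊔ T γ), ‖wf z‖ ≤ 2 * R * ‖(z : X)‖ := by
    intro z
    have h1 := hC (wf z) (hwfW z) (-((z : X) - wf z)) (neg_mem (hwfT z))
    have h2 : wf z - -((z : X) - wf z) = (z : X) := by abel
    rwa [h2] at h1
  let L : ↥(W ⊔ T γ) →ₗ[ℝ] ↥(W ⊔ T γ) :=
    { toFun := fun z => ⟨wf z, (le_sup_left : W ≤ W ⊔ T γ) (hwfW z)⟩
      map_add' := by
        intro z1 z2
        apply Subtype.ext
        show wf (z1 + z2) = wf z1 + wf z2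
        apply huniq
        · exact add_mem (hwfW z1) (hwfW z2)
        · have h1 : ((z1 + z2 : ↥(W ⊔ T γ)) : X) - (wf z1 + wf z2) =
              ((z1 : X) - wf z1) + ((z2 : X) - wf z2) := by
            push_cast
            abel
          rw [h1]
          exact add_mem (hwfT z1) (hwfT z2)
      map_smul' := by
        intro r z
        apply Subtype.ext
        show wf (r • z) = r • wf z
        apply huniq
        · exact Submodule.smul_mem _ _ (hwfW z)
        · have h1 : ((r • z : ↥(W ⊔ T γ)) : X) - r • wf z = r • ((z : X) - wf z) := by
            push_cast
            rw [smul_sub]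
          rw [h1]
          exact Submodule.smul_mem _ _ (hwfT z) }
  have hLbound : ∀ z, ‖L z‖ ≤ 2 * R * ‖z‖ := fun z => hwbound z
  let P : ↥(W ⊔ T γ) →L[ℝ] ↥(W ⊔ T γ) := L.mkContinuous (2 * R) hLbound
  have hPapply : ∀ z : ↥(W ⊔ T γ), ((P z : ↥(W ⊔ T γ)) : X) = wf z := fun z => rfl
  -- density character of the quotient
  have hdens : densChar (X ⧸ (W ⊔ T γ)) ≤ Cardinal.aleph ((m : ℕ) : Ordinal) := by
    set q : X →ₗ[ℝ] X ⧸ (W ⊔ T γ) := (W ⊔ T γ).mkQ with hqdef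
    set G : Set (X ⧸ (W ⊔ T γ)) := q '' (x '' Set.Iio (γ + 1)) with hGdef
    have hγγ1 : γ < γ + 1 := by
      rw [Ordinal.add_one_eq_succ]; exact Order.lt_succ γ
    have hXdense : Dense ((Submodule.span ℝ (x '' Set.Iio lam) : Submodule ℝ X) : Set X) := by
      rw [dense_iff_closure_eq]
      have := congrArg (fun (S : Submodule ℝ X) => (S : Set X)) hgen
      simpa [closedSpan, Submodule.topologicalClosure_coe] using this
    have hsub : q '' ((Submodule.span ℝ (x '' Set.Iio lam) : Submodule ℝ X) : Set X) ⊆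
        ((Submodule.span ℝ G : Submodule ℝ (X ⧸ (W ⊔ T γ))) : Set _) := by
      have h1 : q '' ((Submodule.span ℝ (x '' Set.Iio lam) : Submodule ℝ X) : Set X) =
          ((Submodule.map q (Submodule.span ℝ (x '' Set.Iio lam))) : Set _) :=
        (Submodule.map_coe q _).symm
      rw [h1, Submodule.map_span]
      have h2 : q '' (x '' Set.Iio lam) ⊆ insert 0 G := by
        rintro _ ⟨_, ⟨α, hα, rfl⟩, rfl⟩
        by_cases hαγ : α < γ + 1
        · exact Set.mem_insert_of_mem _ ⟨x α, ⟨α, hαγ, rfl⟩, rfl⟩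
        · left
          have hγα : γ < α := lt_of_lt_of_le hγγ1 (not_lt.1 hαγ)
          have hxmem : x α ∈ T γ :=
            (Submodule.le_topologicalClosure _) (Submodule.subset_span ⟨α, ⟨hγα, hα⟩, rfl⟩)
          show q (x α) = 0
          rw [hqdef, Submodule.mkQ_apply, Submodule.Quotient.mk_eq_zero]
          exact (le_sup_right : T γ ≤ W ⊔ T γ) hxmem
      have h3 : Submodule.span ℝ (q '' (x '' Set.Iio lam)) ≤ Submodule.span ℝ G := by
        refine le_trans (Submodule.span_mono h2) ?_
        rw [Submodule.span_insert_zero]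
      exact fun v hv => h3 hv
    have hspanGdense : Dense ((Submodule.span ℝ G : Submodule ℝ (X ⧸ (W ⊔ T γ))) : Set (X ⧸ (W ⊔ T γ))) := by
      rw [Metric.dense_iff]
      intro v r hr
      obtain ⟨mrep, hmrep⟩ := Submodule.Quotient.mk_surjective _ v
      obtain ⟨pnt, hpnt, hdist⟩ := Metric.mem_closure_iff.1 (hXdense mrep) r hr
      refine ⟨q pnt, Metric.mem_ball.2 ?_, hsub ⟨pnt, hpnt, rfl⟩⟩
      have h1 : q pnt - v = Submodule.Quotient.mk (pnt - mrep) := by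
        rw [← hmrep, hqdef, Submodule.mkQ_apply, ← Submodule.Quotient.mk_sub]
      rw [dist_eq_norm, h1]
      refine lt_of_le_of_lt (Submodule.Quotient.norm_mk_le _ _) ?_
      rw [← dist_eq_norm, dist_comm]
      exact hdist
    obtain ⟨D2, hD2span, hD2card⟩ := exists_ratCombo G
    have hD2dense : Dense D2 := by
      rw [dense_iff_closure_eq]
      have h1 : closure ((Submodule.span ℝ G : Submodule ℝ (X ⧸ (W ⊔ T γ))) : Set (X ⧸ (W ⊔ T γ))) ⊆
          closure D2 := by
        have := closure_mono hD2span
        rwa [closure_closure] at this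
      rw [dense_iff_closure_eq] at hspanGdense
      exact Set.eq_univ_of_univ_subset (hspanGdense ▸ h1)
    have hGcard : #G ≤ Cardinal.aleph ((m : ℕ) : Ordinal) := by
      have h1 : #G ≤ #(x '' Set.Iio (γ + 1)) := Cardinal.mk_image_le
      have h2 : Cardinal.lift.{u+1} #(x '' Set.Iio (γ + 1)) ≤
          Cardinal.lift.{u} #(Set.Iio (γ + 1)) := Cardinal.mk_image_le_lift
      rw [Ordinal.mk_Iio_ordinal] at h2
      have h3 : #(x '' Set.Iio (γ + 1)) ≤ (γ + 1).card := by
        have := h2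
        rw [Cardinal.lift_lift] at this
        exact Cardinal.lift_le.1 this
      have h4 : (γ + 1).card < Cardinal.aleph ((m + 1 : ℕ) : Ordinal) := by
        rw [← Cardinal.lt_ord]
        rw [Ordinal.add_one_eq_succ]
        exact (Cardinal.isSuccLimit_ord (Cardinal.aleph0_le_aleph _)).succ_lt hγ
      have h5 : (γ + 1).card ≤ Cardinal.aleph ((m : ℕ) : Ordinal) := by
        rw [hcast, Cardinal.aleph_succ] at h4
        exact Order.lt_succ_iff.1 h4
      exact h1.trans (h3.trans h5)
    apply max_le (Cardinal.aleph0_le_aleph _)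
    refine le_trans (csInf_le' ⟨D2, hD2dense, rfl⟩) ?_
    exact hD2card.trans (max_le (Cardinal.aleph0_le_aleph _) hGcard)
  refine ⟨W ⊔ T γ, hZclosed, by simpa using hdens, W, hWsep, hYW, le_sup_left, P, ?_, ?_, ?_⟩
  · intro v
    apply Subtype.ext
    rw [hPapply, hPapply]
    apply huniq
    · exact hwfW v
    · rw [hPapply]
      simpa using Submodule.zero_mem (T γ)
  · intro v
    rw [hPapply]
    exact hwfW v
  · intro v hv
    apply Subtype.ext
    rw [hPapply]
    exact huniq v (v : X) hv (by simpa using Submodule.zero_mem (T γ))
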